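/- Fix natural numbers m₁ ≥ 1 and m₂, and set m = m₁ + m₂. Consider the uniform probability distribution on the set of binary strings of length m containing exactly m₁ symbols 'a' and m₂ symbols 'b'. For a natural number k with 1 ≤ k ≤ m₁, let s_{1k} denote the number of maximal runs of consecutive a's having length at least k. Then E[s_{1k}] = (m₂+1)·m₁^{(k)} / m^{(k)}, where a^{(j)} denotes the falling factorial a·(a−1)···(a−j+1) with a^{(0)} = 1. -/

import Mathlib

open Finset

/-- The number of maximal runs of `a`'s (`true`s) of length at least `k` in a
binary string `w` of length `m`: each such run is counted once via its starting
position `i`, i.e. a position with `k` consecutive `true`s from `i` on, whose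
predecessor (if any) is `false`. -/
def runsAtLeast (m k : ℕ) (w : Fin m → Bool) : ℕ :=
  (Finset.univ.filter (fun i : Fin m =>
    (i : ℕ) + k ≤ m ∧
    (∀ j : Fin m, (i : ℕ) ≤ (j : ℕ) → (j : ℕ) < (i : ℕ) + k → w j = true) ∧
    (∀ j : Fin m, (j : ℕ) + 1 = (i : ℕ) → w j = false))).card


/-- General counting lemma: number of binary strings with exactly `t` trues,
true on `A`, false on `B`. -/
lemma count_fixed (m t : ℕ) (A B : Finset (Fin m)) (hAB : Disjoint A B) (hA : A.card ≤ t) :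
    (Finset.univ.filter (fun w : Fin m → Bool =>
      (Finset.univ.filter (fun j => w j = true)).card = t ∧
      (∀ j ∈ A, w j = true) ∧ (∀ j ∈ B, w j = false))).card
    = ((Finset.univ \ (A ∪ B)).card).choose (t - A.card) := by
  rw [← Finset.card_powersetCard]
  apply Finset.card_nbij' (i := fun w => Finset.univ.filter (fun j => w j = true) \ A)
    (j := fun T => fun j => decide (j ∈ T ∨ j ∈ A))
  · intro w hw
    simp only [Finset.mem_coe, Finset.mem_filter, Finset.mem_univ, true_and] at hw
    obtain ⟨hcard, hAtrue, hBfalse⟩ := hw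
    rw [Finset.mem_coe, Finset.mem_powersetCard]
    constructor
    · intro j hj
      simp only [Finset.mem_sdiff, Finset.mem_filter, Finset.mem_univ, true_and,
        Finset.mem_union] at hj ⊢
      rintro (h | h)
      · exact hj.2 h
      · rw [hBfalse j h] at hj; exact Bool.false_ne_true hj.1
    · have hsub : A ⊆ Finset.univ.filter (fun j => w j = true) := by
        intro j hj
        simp only [Finset.mem_filter, Finset.mem_univ, true_and]
        exact hAtrue j hj
      rw [Finset.card_sdiff_of_subset hsub, hcard]
  · intro T hT
    rw [Finset.mem_coe, Finset.mem_powersetCard] at hT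
    obtain ⟨hTsub, hTcard⟩ := hT
    have hTA : Disjoint T A := by
      refine Finset.disjoint_left.2 fun j hj hjA => ?_
      have := hTsub hj
      simp only [Finset.mem_sdiff, Finset.mem_union] at this
      exact this.2 (Or.inl hjA)
    have hfil : (Finset.univ.filter (fun j => decide (j ∈ T ∨ j ∈ A) = true)) = T ∪ A := by
      ext j; simp [Finset.mem_union]
    simp only [Finset.mem_coe, Finset.mem_filter, Finset.mem_univ, true_and]
    refine ⟨?_, ?_, ?_⟩
    · rw [hfil, Finset.card_union_of_disjoint hTA, hTcard]
      omega
    · intro j hj; simp [hj]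
    · intro j hj
      have h1 : j ∉ T := by
        intro hjT
        have := hTsub hjT
        simp only [Finset.mem_sdiff, Finset.mem_union] at this
        exact this.2 (Or.inr hj)
      have h2 : j ∉ A := Finset.disjoint_right.1 hAB hj
      simp [h1, h2]
  · intro w hw
    simp only [Finset.mem_coe, Finset.mem_filter, Finset.mem_univ, true_and] at hw
    funext j
    by_cases hj : w j = true
    · by_cases hjA : j ∈ A
      · simp [hjA, hj]
      · simp [hj, hjA]
    · have h1 : j ∉ A := fun h => hj (hw.2.1 j h)
      simp only [Bool.not_eq_true] at hj
      simp [hj, h1]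
  · intro T hT
    rw [Finset.mem_coe, Finset.mem_powersetCard] at hT
    have hTA : Disjoint T A := by
      refine Finset.disjoint_left.2 fun j hj hjA => ?_
      have := hT.1 hj
      simp only [Finset.mem_sdiff, Finset.mem_union] at this
      exact this.2 (Or.inl hjA)
    have hfil : (Finset.univ.filter (fun j => decide (j ∈ T ∨ j ∈ A) = true)) = T ∪ A := by
      ext j; simp [Finset.mem_union]
    beta_reduce
    rw [hfil, Finset.union_sdiff_cancel_right hTA]


lemma filter_val_card (m : ℕ) (p : ℕ → Prop) [DecidablePred p] :
    (Finset.univ.filter (fun j : Fin m => p j.val)).card = ((Finset.range m).filter p).card := by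
  rw [Finset.card_filter, Finset.card_filter, Fin.sum_univ_eq_sum_range (fun x => if p x then 1 else 0)]

lemma nat_key (m₁ m k : ℕ) (hk : k ≤ m₁) (hm : m₁ ≤ m) :
    (m - k).choose (m₁ - k) * m.descFactorial k = m.choose m₁ * m₁.descFactorial k := by
  apply Nat.eq_of_mul_eq_mul_right (Nat.mul_pos (Nat.factorial_pos (m₁ - k)) (Nat.factorial_pos (m - m₁)))
  have h1 : (m - k) - (m₁ - k) = m - m₁ := by omega
  have e1 : (m - k).choose (m₁ - k) * (m₁ - k).factorial * (m - m₁).factorial = (m - k).factorial := by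
    rw [← h1]; exact Nat.choose_mul_factorial_mul_factorial (by omega)
  have e2 : m.choose m₁ * m₁.factorial * (m - m₁).factorial = m.factorial := Nat.choose_mul_factorial_mul_factorial hm
  have e3 : (m - k).factorial * m.descFactorial k = m.factorial := Nat.factorial_mul_descFactorial (by omega)
  have e4 : (m₁ - k).factorial * m₁.descFactorial k = m₁.factorial := Nat.factorial_mul_descFactorial hk
  calc (m - k).choose (m₁ - k) * m.descFactorial k * ((m₁ - k).factorial * (m - m₁).factorial)
      = ((m - k).choose (m₁ - k) * (m₁ - k).factorial * (m - m₁).factorial) * m.descFactorial k := by ring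
    _ = m.factorial := by rw [e1, e3]
    _ = m.choose m₁ * m₁.factorial * (m - m₁).factorial := e2.symm
    _ = m.choose m₁ * ((m₁ - k).factorial * m₁.descFactorial k) * (m - m₁).factorial := by rw [e4]
    _ = m.choose m₁ * m₁.descFactorial k * ((m₁ - k).factorial * (m - m₁).factorial) := by ring

lemma nat_key2 (m₁ m₂ m k : ℕ) (hm : m = m₁ + m₂) (hk : k ≤ m₁) :
    (m - k) * (m - k - 1).choose (m₁ - k) = m₂ * (m - k).choose (m₁ - k) := by
  rcases Nat.eq_zero_or_pos m₂ with h0 | hpos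
  · subst h0
    rcases Nat.eq_or_lt_of_le hk with he | hlt
    · simp [hm, ← he]
    · rw [Nat.choose_eq_zero_of_lt (by omega)]
      simp
  · obtain ⟨c, rfl⟩ : ∃ c, m₂ = c + 1 := ⟨m₂ - 1, by omega⟩
    set r := m₁ - k with hr
    have hn : m - k = r + c + 1 := by omega
    rw [hn]
    have h1 : (r + c + 1 - 1).choose r = (r + c).choose c := by
      rw [show r + c + 1 - 1 = r + c by omega, ← Nat.choose_symm (by omega),
        show r + c - r = c by omega]
    rw [h1]
    have h2 := Nat.add_one_mul_choose_eq (r + c) c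
    have h3 : (r + c + 1).choose r = (r + c + 1).choose (c + 1) := by
      rw [← Nat.choose_symm (show c + 1 ≤ r + c + 1 by omega), show r + c + 1 - (c+1) = r by omega]
    rw [h3, h2, Nat.mul_comm]

/-- Mood's expectation formula for runs (Lemma `LemmaDistributionTheory`):
under the uniform distribution on binary strings of length `m = m₁ + m₂` with
exactly `m₁` symbols `a` (`true`), the expected number of runs of `a`'s of
length at least `k` equals `(m₂+1)·m₁^(k) / m^(k)` (falling factorials). -/
theorem runs_expectation (m₁ m₂ m k : ℕ) (hm₁ : 1 ≤ m₁) (hm : m = m₁ + m₂)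
    (hk1 : 1 ≤ k) (hk2 : k ≤ m₁)
    (Ω : Finset (Fin m → Bool))
    (hΩ : Ω = Finset.univ.filter
      (fun w => (Finset.univ.filter (fun i => w i = true)).card = m₁)) :
    (∑ w ∈ Ω, (runsAtLeast m k w : ℝ)) / (Ω.card : ℝ) =
      ((m₂ + 1) * m₁.descFactorial k : ℝ) / (m.descFactorial k : ℝ) := by
  have hm₁m : m₁ ≤ m := by omega
  have hkm : k ≤ m := by omega
  have hm1 : 1 ≤ m := by omega
  -- cardinality of Ω
  have hΩcard : Ω.card = m.choose m₁ := by
    rw [hΩ]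
    have h := count_fixed m m₁ (∅ : Finset (Fin m)) ∅ (by simp) (by simp)
    have hset : (Finset.univ.filter
          (fun w : Fin m → Bool => (Finset.univ.filter (fun i => w i = true)).card = m₁))
        = Finset.univ.filter (fun w : Fin m → Bool =>
            (Finset.univ.filter (fun j => w j = true)).card = m₁ ∧
            (∀ j ∈ (∅ : Finset (Fin m)), w j = true) ∧
            (∀ j ∈ (∅ : Finset (Fin m)), w j = false)) := by
      apply Finset.filter_congr; intro w _; simp
    rw [hset, h]
    simp [Finset.card_univ]
  -- compute the total sum
  have hsum : ∑ w ∈ Ω, runsAtLeast m k w = (m₂ + 1) * (m - k).choose (m₁ - k) := by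
    -- the fiber counting
    have hfib : ∀ i ∈ Finset.univ.filter (fun i : Fin m => (i : ℕ) + k ≤ m),
        (Ω.filter (fun w => (i : ℕ) + k ≤ m ∧
          (∀ j : Fin m, (i : ℕ) ≤ (j : ℕ) → (j : ℕ) < (i : ℕ) + k → w j = true) ∧
          (∀ j : Fin m, (j : ℕ) + 1 = (i : ℕ) → w j = false))).card
        = (m - k - (if (i : ℕ) = 0 then 0 else 1)).choose (m₁ - k) := by
      intro i hi
      rw [Finset.mem_filter] at hi
      have hik : (i : ℕ) + k ≤ m := hi.2
      set A : Finset (Fin m) :=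
        Finset.univ.filter (fun j : Fin m => (i : ℕ) ≤ (j : ℕ) ∧ (j : ℕ) < (i : ℕ) + k) with hA
      set B : Finset (Fin m) :=
        Finset.univ.filter (fun j : Fin m => (j : ℕ) + 1 = (i : ℕ)) with hB
      have hAmem : ∀ j : Fin m, j ∈ A ↔ ((i : ℕ) ≤ (j : ℕ) ∧ (j : ℕ) < (i : ℕ) + k) := by
        intro j; simp [hA]
      have hBmem : ∀ j : Fin m, j ∈ B ↔ ((j : ℕ) + 1 = (i : ℕ)) := by
        intro j; simp [hB]
      have hAB : Disjoint A B := by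
        refine Finset.disjoint_left.2 fun j hjA hjB => ?_
        rw [hAmem] at hjA; rw [hBmem] at hjB; omega
      have hAcard : A.card = k := by
        rw [hA, filter_val_card m (fun x => (i : ℕ) ≤ x ∧ x < (i : ℕ) + k)]
        have : (Finset.range m).filter (fun x => (i : ℕ) ≤ x ∧ x < (i : ℕ) + k)
            = Finset.Ico (i : ℕ) ((i : ℕ) + k) := by
          ext x
          simp only [Finset.mem_filter, Finset.mem_range, Finset.mem_Ico]
          omega
        rw [this, Nat.card_Ico]
        omega
      have hBcard : B.card = (if (i : ℕ) = 0 then 0 else 1) := by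
        rw [hB, filter_val_card m (fun x => x + 1 = (i : ℕ))]
        by_cases h0 : (i : ℕ) = 0
        · rw [if_pos h0]
          rw [Finset.card_eq_zero, Finset.filter_eq_empty_iff]
          intro x _; omega
        · rw [if_neg h0]
          have : (Finset.range m).filter (fun x => x + 1 = (i : ℕ)) = {(i : ℕ) - 1} := by
            ext x
            simp only [Finset.mem_filter, Finset.mem_range, Finset.mem_singleton]
            have := i.isLt
            omega
          rw [this, Finset.card_singleton]
      rw [hΩ, Finset.filter_filter]
      have hcongr : Finset.univ.filter (fun w : Fin m → Bool =>
          (Finset.univ.filter (fun j => w j = true)).card = m₁ ∧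
          ((i : ℕ) + k ≤ m ∧
            (∀ j : Fin m, (i : ℕ) ≤ (j : ℕ) → (j : ℕ) < (i : ℕ) + k → w j = true) ∧
            (∀ j : Fin m, (j : ℕ) + 1 = (i : ℕ) → w j = false)))
        = Finset.univ.filter (fun w : Fin m → Bool =>
          (Finset.univ.filter (fun j => w j = true)).card = m₁ ∧
          (∀ j ∈ A, w j = true) ∧ (∀ j ∈ B, w j = false)) := by
        apply Finset.filter_congr
        intro w _
        constructor
        · rintro ⟨h1, _, h2, h3⟩
          exact ⟨h1, fun j hj => h2 j ((hAmem j).1 hj).1 ((hAmem j).1 hj).2,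
            fun j hj => h3 j ((hBmem j).1 hj)⟩
        · rintro ⟨h1, h2, h3⟩
          exact ⟨h1, hik, fun j hj1 hj2 => h2 j ((hAmem j).2 ⟨hj1, hj2⟩),
            fun j hj => h3 j ((hBmem j).2 hj)⟩
      rw [hcongr, count_fixed m m₁ A B hAB (by omega)]
      have hcompl : (Finset.univ \ (A ∪ B)).card = m - k - (if (i : ℕ) = 0 then 0 else 1) := by
        rw [Finset.card_sdiff_of_subset (Finset.subset_univ _), Finset.card_union_of_disjoint hAB,
          Finset.card_univ, Fintype.card_fin, hAcard, hBcard]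
        split <;> omega
      rw [hcompl, hAcard]
    -- swap the sum
    have hswap : ∑ w ∈ Ω, runsAtLeast m k w
        = ∑ i ∈ Finset.univ.filter (fun i : Fin m => (i : ℕ) + k ≤ m),
            (Ω.filter (fun w => (i : ℕ) + k ≤ m ∧
              (∀ j : Fin m, (i : ℕ) ≤ (j : ℕ) → (j : ℕ) < (i : ℕ) + k → w j = true) ∧
              (∀ j : Fin m, (j : ℕ) + 1 = (i : ℕ) → w j = false))).card := by
      simp only [runsAtLeast, Finset.card_filter]
      rw [Finset.sum_comm]
      symm
      apply Finset.sum_filter_of_ne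
      intro i _ hne
      by_contra h
      apply hne
      apply Finset.sum_eq_zero
      intro w _
      rw [if_neg]
      intro hE
      exact h hE.1

    rw [hswap, Finset.sum_congr rfl hfib]
    clear hswap hfib
    rw [← Finset.sum_filter_add_sum_filter_not _ (fun i : Fin m => (i : ℕ) = 0)]
    have hc1 : ((Finset.univ.filter (fun i : Fin m => (i : ℕ) + k ≤ m)).filter
        (fun i : Fin m => (i : ℕ) = 0) |>.card) = 1 := by
      rw [Finset.filter_filter, filter_val_card m (fun x => (x + k ≤ m) ∧ x = 0)]
      have : (Finset.range m).filter (fun x => (x + k ≤ m) ∧ x = 0) = {0} := by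
        ext x
        simp only [Finset.mem_filter, Finset.mem_range, Finset.mem_singleton]
        omega
      rw [this, Finset.card_singleton]
    have hc2 : ((Finset.univ.filter (fun i : Fin m => (i : ℕ) + k ≤ m)).filter
        (fun i : Fin m => ¬((i : ℕ) = 0)) |>.card) = m - k := by
      rw [Finset.filter_filter, filter_val_card m (fun x => (x + k ≤ m) ∧ ¬(x = 0))]
      have : (Finset.range m).filter (fun x => (x + k ≤ m) ∧ ¬(x = 0))
          = Finset.Ico 1 (m - k + 1) := by
        ext x
        simp only [Finset.mem_filter, Finset.mem_range, Finset.mem_Ico]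
        omega
      rw [this, Nat.card_Ico]
      omega
    have e1 : ∑ i ∈ (Finset.univ.filter (fun i : Fin m => (i : ℕ) + k ≤ m)).filter
          (fun i : Fin m => (i : ℕ) = 0), (m - k - (if (i : ℕ) = 0 then 0 else 1)).choose (m₁ - k)
        = (m - k).choose (m₁ - k) := by
      calc _ = ∑ _i ∈ (Finset.univ.filter (fun i : Fin m => (i : ℕ) + k ≤ m)).filter
            (fun i : Fin m => (i : ℕ) = 0), (m - k).choose (m₁ - k) :=
          Finset.sum_congr rfl (fun i hi => by
            rw [Finset.mem_filter] at hi
            rw [if_pos hi.2, Nat.sub_zero])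
        _ = _ := by rw [Finset.sum_const, hc1, one_smul]
    have e2 : ∑ i ∈ (Finset.univ.filter (fun i : Fin m => (i : ℕ) + k ≤ m)).filter
          (fun i : Fin m => ¬((i : ℕ) = 0)), (m - k - (if (i : ℕ) = 0 then 0 else 1)).choose (m₁ - k)
        = (m - k) * (m - k - 1).choose (m₁ - k) := by
      calc _ = ∑ _i ∈ (Finset.univ.filter (fun i : Fin m => (i : ℕ) + k ≤ m)).filter
            (fun i : Fin m => ¬((i : ℕ) = 0)), (m - k - 1).choose (m₁ - k) :=
          Finset.sum_congr rfl (fun i hi => by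
            rw [Finset.mem_filter] at hi
            rw [if_neg hi.2])
        _ = _ := by rw [Finset.sum_const, hc2, smul_eq_mul]
    rw [e1, e2, nat_key2 m₁ m₂ m k hm hk2]
    ring
  -- finish
  have hcast : (∑ w ∈ Ω, (runsAtLeast m k w : ℝ)) = ((∑ w ∈ Ω, runsAtLeast m k w : ℕ) : ℝ) := by
    exact (Nat.cast_sum _ _).symm
  rw [hcast, hsum, hΩcard]
  rw [div_eq_div_iff
    (by exact_mod_cast Nat.choose_pos hm₁m |>.ne')
    (by
      have : m.descFactorial k ≠ 0 := by
        rw [Ne, Nat.descFactorial_eq_zero_iff_lt]; omega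
      exact_mod_cast this)]
  push_cast
  have := nat_key m₁ m k hk2 hm₁m
  have : ((m - k).choose (m₁ - k) * m.descFactorial k : ℝ)
      = (m.choose m₁ * m₁.descFactorial k : ℝ) := by exact_mod_cast this
  nlinarith [this]
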